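/- There exists a finite constant C such that for every λ > 0, ∫₀¹ (λ + v²)/(v² + (λ + v²)²) dv ≤ C. -/

import Mathlib

open MeasureTheory Real

lemma aux_integral_lam (lam : ℝ) (hl : 0 < lam) :
    ∫ v in (0:ℝ)..1, lam / (lam ^ 2 + v ^ 2) = Real.arctan (1 / lam) := by
  have h : ∀ v : ℝ, lam / (lam ^ 2 + v ^ 2) = (1 / lam) * (1 / (1 + (v / lam) ^ 2)) := by
    intro v
    field_simp
  simp_rw [h]
  rw [intervalIntegral.integral_const_mul, intervalIntegral.integral_comp_div
    (f := fun u => 1 / (1 + u ^ 2)) hl.ne']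
  rw [integral_one_div_one_add_sq]
  simp [smul_eq_mul]
  field_simp

theorem stmt_8 :
    ∃ C : ℝ, ∀ lam : ℝ, 0 < lam →
      ∫ v in Set.Icc (0 : ℝ) 1, (lam + v ^ 2) / (v ^ 2 + (lam + v ^ 2) ^ 2) ≤ C := by
  use Real.pi / 2 + 1
  intro lam hl
  have hD : ∀ v : ℝ, 0 < v ^ 2 + (lam + v ^ 2) ^ 2 := by
    intro v
    have : 0 < lam + v ^ 2 := by positivity
    positivity
  -- continuity / integrability of f
  have hf_cont : Continuous fun v : ℝ => (lam + v ^ 2) / (v ^ 2 + (lam + v ^ 2) ^ 2) := by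
    apply Continuous.div (by continuity) (by continuity)
    intro v; exact (hD v).ne'
  have hg_cont : Continuous fun v : ℝ => lam / (lam ^ 2 + v ^ 2) + 1 := by
    apply Continuous.add _ continuous_const
    apply Continuous.div continuous_const (by continuity)
    intro v; positivity
  have hf_int : IntegrableOn (fun v : ℝ => (lam + v ^ 2) / (v ^ 2 + (lam + v ^ 2) ^ 2))
      (Set.Icc (0:ℝ) 1) := hf_cont.integrableOn_Icc
  have hg_int : IntegrableOn (fun v : ℝ => lam / (lam ^ 2 + v ^ 2) + 1)
      (Set.Icc (0:ℝ) 1) := hg_cont.integrableOn_Icc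
  have hmono : ∫ v in Set.Icc (0 : ℝ) 1, (lam + v ^ 2) / (v ^ 2 + (lam + v ^ 2) ^ 2)
      ≤ ∫ v in Set.Icc (0 : ℝ) 1, (lam / (lam ^ 2 + v ^ 2) + 1) := by
    apply setIntegral_mono hf_int hg_int
    intro v
    have hD' := hD v
    dsimp only
    have h1 : (lam + v ^ 2) / (v ^ 2 + (lam + v ^ 2) ^ 2)
        = lam / (v ^ 2 + (lam + v ^ 2) ^ 2) + v ^ 2 / (v ^ 2 + (lam + v ^ 2) ^ 2) := by
      rw [← add_div]
    rw [h1]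
    apply add_le_add
    · exact div_le_div_of_nonneg_left hl.le (by positivity)
        (by nlinarith [sq_nonneg v, sq_nonneg (v ^ 2), mul_nonneg hl.le (sq_nonneg v)])
    · rw [div_le_one hD']
      nlinarith [sq_nonneg (lam + v ^ 2)]
  refine hmono.trans ?_
  have hsplit : ∫ v in Set.Icc (0 : ℝ) 1, (lam / (lam ^ 2 + v ^ 2) + 1)
      = (∫ v in Set.Icc (0 : ℝ) 1, lam / (lam ^ 2 + v ^ 2)) + 1 := by
    rw [integral_add ?_ (integrable_const 1)]
    · simp
    · exact (Continuous.div continuous_const (by continuity)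
        (fun v => by positivity)).integrableOn_Icc
  rw [hsplit]
  have : ∫ v in Set.Icc (0 : ℝ) 1, lam / (lam ^ 2 + v ^ 2) = Real.arctan (1 / lam) := by
    rw [MeasureTheory.integral_Icc_eq_integral_Ioc,
      ← intervalIntegral.integral_of_le (by norm_num : (0:ℝ) ≤ 1)]
    exact aux_integral_lam lam hl
  rw [this]
  have := (Real.arctan_lt_pi_div_two (1 / lam)).le
  linarith
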